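/- arXiv:2010.12187 — 2 statements merged into one kernel-verified Lean document; each statement's English description precedes it below -/
import Mathlib

section
/- Let m, N ≥ 1, h > 0, α ∈ [0,2π), ω = e^{iα}, and set α_k = (kπ + α/2)/N for k ∈ {0,…,N−1}. For Λ ∈ ℂ, there exists a nonzero z̃ ∈ W̃_ω with −J(z_{n+1} − z_n)/h = Λ·z̃_n for all n ∈ ℤ if and only if Λ ∈ {2 sin(α_k)/h : 0 ≤ k ≤ N−1} ∪ {−2 sin(α_k)/h : 0 ≤ k ≤ N−1}. -/
open Matrix

namespace DHS

/-- The ambient space of pairs of sequences `x, y : ℤ → ℂ^m`. -/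
abbrev V (m : ℕ) := (ℤ → Fin m → ℂ) × (ℤ → Fin m → ℂ)

/-- The standard symplectic matrix `J = [[0, -I_m],[I_m, 0]]` in `m × m` blocks. -/
def Jm (m : ℕ) : Matrix (Fin m ⊕ Fin m) (Fin m ⊕ Fin m) ℂ :=
  Matrix.fromBlocks 0 (-1) 1 0

/-- `z_n = (x_n, y_n) ∈ ℂ^{2m}`. -/
def zf {m : ℕ} (z : V m) (n : ℤ) : Fin m ⊕ Fin m → ℂ := Sum.elim (z.1 n) (z.2 n)

/-- `z̃_n = (x_{n+1}, y_n) ∈ ℂ^{2m}`. -/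
def zt {m : ℕ} (z : V m) (n : ℤ) : Fin m ⊕ Fin m → ℂ := Sum.elim (z.1 (n + 1)) (z.2 n)

/-- The standard Hermitian product `⟨u, v⟩ = Σ_i u_i · conj (v_i)` on `ℂ^{2m}`. -/
noncomputable def herm {α : Type} [Fintype α] (u v : α → ℂ) : ℂ :=
  ∑ i, u i * (starRingEnd ℂ) (v i)

/-- The space `W̃_ω` of pairs of sequences with `x_{n+N} = ω x_n`, `y_{n+N} = ω y_n`. -/
noncomputable def Wt (m N : ℕ) (ω : ℂ) : Submodule ℂ (V m) where
  carrier := {z | ∀ n : ℤ, z.1 (n + (N : ℤ)) = ω • z.1 n ∧ z.2 (n + (N : ℤ)) = ω • z.2 n}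
  add_mem' := by
    intro a b ha hb n
    refine ⟨?_, ?_⟩
    · show (a.1 + b.1) (n + (N : ℤ)) = ω • (a.1 + b.1) n
      simp [Pi.add_apply, (ha n).1, (hb n).1, smul_add]
    · show (a.2 + b.2) (n + (N : ℤ)) = ω • (a.2 + b.2) n
      simp [Pi.add_apply, (ha n).2, (hb n).2, smul_add]
  zero_mem' := by intro n; simp
  smul_mem' := by
    intro c a ha n
    refine ⟨?_, ?_⟩
    · show (c • a.1) (n + (N : ℤ)) = ω • (c • a.1) n
      simp [Pi.smul_apply, (ha n).1, smul_comm c ω]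
    · show (c • a.2) (n + (N : ℤ)) = ω • (c • a.2) n
      simp [Pi.smul_apply, (ha n).2, smul_comm c ω]

/-- The form `𝒜_{h,ω}(z̃, w̃) = Σ_{n=1}^{N} [⟨−J(z_{n+1}−z_n)/h, w̃_n⟩ − ⟨B_n z̃_n, w̃_n⟩]`. -/
noncomputable def Aform (m N : ℕ) (h : ℝ)
    (B : ℤ → Matrix (Fin m ⊕ Fin m) (Fin m ⊕ Fin m) ℝ) (z w : V m) : ℂ :=
  ∑ n ∈ Finset.Icc (1 : ℤ) (N : ℤ),
    (herm (((h : ℂ))⁻¹ • ((-(Jm m)).mulVec (zf z (n + 1) - zf z n))) (zt w n)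
      - herm (((B n).map (fun x => (x : ℂ))).mulVec (zt z n)) (zt w n))

lemma herm_add_left {α : Type} [Fintype α] (u v w : α → ℂ) :
    herm (u + v) w = herm u w + herm v w := by
  simp [herm, add_mul, Finset.sum_add_distrib]

lemma herm_smul_left {α : Type} [Fintype α] (c : ℂ) (u w : α → ℂ) :
    herm (c • u) w = c * herm u w := by
  simp [herm, Finset.mul_sum, mul_assoc]

lemma herm_zero_left {α : Type} [Fintype α] (w : α → ℂ) : herm 0 w = 0 := by
  simp [herm]

lemma zf_add {m : ℕ} (a b : V m) (n : ℤ) : zf (a + b) n = zf a n + zf b n := by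
  funext i; cases i <;> rfl

lemma zf_smul {m : ℕ} (c : ℂ) (a : V m) (n : ℤ) : zf (c • a) n = c • zf a n := by
  funext i; cases i <;> rfl

lemma zf_zero {m : ℕ} (n : ℤ) : zf (0 : V m) n = 0 := by
  funext i; cases i <;> rfl

lemma zt_add {m : ℕ} (a b : V m) (n : ℤ) : zt (a + b) n = zt a n + zt b n := by
  funext i; cases i <;> rfl

lemma zt_smul {m : ℕ} (c : ℂ) (a : V m) (n : ℤ) : zt (c • a) n = c • zt a n := by
  funext i; cases i <;> rfl

lemma zt_zero {m : ℕ} (n : ℤ) : zt (0 : V m) n = 0 := by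
  funext i; cases i <;> rfl

lemma Aform_add_left (m N : ℕ) (h : ℝ)
    (B : ℤ → Matrix (Fin m ⊕ Fin m) (Fin m ⊕ Fin m) ℝ) (a b w : V m) :
    Aform m N h B (a + b) w = Aform m N h B a w + Aform m N h B b w := by
  unfold Aform
  rw [← Finset.sum_add_distrib]
  refine Finset.sum_congr rfl fun n _ => ?_
  rw [zf_add, zf_add, zt_add, add_sub_add_comm, Matrix.mulVec_add, smul_add, herm_add_left,
    Matrix.mulVec_add, herm_add_left]
  ring

lemma Aform_smul_left (m N : ℕ) (h : ℝ)
    (B : ℤ → Matrix (Fin m ⊕ Fin m) (Fin m ⊕ Fin m) ℝ) (c : ℂ) (a w : V m) :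
    Aform m N h B (c • a) w = c * Aform m N h B a w := by
  unfold Aform
  rw [Finset.mul_sum]
  refine Finset.sum_congr rfl fun n _ => ?_
  rw [zf_smul, zf_smul, zt_smul, ← smul_sub]
  simp only [Matrix.mulVec_smul, smul_comm ((h : ℂ))⁻¹ c, herm_smul_left]
  ring

lemma Aform_zero_left (m N : ℕ) (h : ℝ)
    (B : ℤ → Matrix (Fin m ⊕ Fin m) (Fin m ⊕ Fin m) ℝ) (w : V m) :
    Aform m N h B (0 : V m) w = 0 := by
  unfold Aform
  refine Finset.sum_eq_zero fun n _ => ?_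
  rw [zf_zero, zf_zero, zt_zero]
  simp [herm_zero_left]

/-- The null space `{z̃ ∈ W̃_ω : 𝒜_{h,ω}(z̃, w̃) = 0 for all w̃ ∈ W̃_ω}`. -/
noncomputable def nullSp (m N : ℕ) (h : ℝ) (ω : ℂ)
    (B : ℤ → Matrix (Fin m ⊕ Fin m) (Fin m ⊕ Fin m) ℝ) : Submodule ℂ (V m) where
  carrier := {z | z ∈ Wt m N ω ∧ ∀ w ∈ Wt m N ω, Aform m N h B z w = 0}
  add_mem' := by
    intro a b ha hb
    exact ⟨(Wt m N ω).add_mem ha.1 hb.1, fun w hw => by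
      rw [Aform_add_left, ha.2 w hw, hb.2 w hw, add_zero]⟩
  zero_mem' := ⟨(Wt m N ω).zero_mem, fun w _ => Aform_zero_left m N h B w⟩
  smul_mem' := by
    intro c a ha
    exact ⟨(Wt m N ω).smul_mem c ha.1, fun w hw => by
      rw [Aform_smul_left, ha.2 w hw, mul_zero]⟩

/-- `m⁰_{h,ω}`: the dimension of the null space of `𝒜_{h,ω}`. -/
noncomputable def mZero (m N : ℕ) (h : ℝ) (ω : ℂ)
    (B : ℤ → Matrix (Fin m ⊕ Fin m) (Fin m ⊕ Fin m) ℝ) : ℕ :=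
  Module.finrank ℂ ↥(nullSp m N h ω B)

/-- `m⁺_{h,ω}`: the maximal dimension of a complex subspace of `W̃_ω` on which
`z̃ ↦ 𝒜_{h,ω}(z̃, z̃)` is positive definite. -/
noncomputable def mPlus (m N : ℕ) (h : ℝ) (ω : ℂ)
    (B : ℤ → Matrix (Fin m ⊕ Fin m) (Fin m ⊕ Fin m) ℝ) : ℕ :=
  sSup {d : ℕ | ∃ S : Submodule ℂ (V m), S ≤ Wt m N ω ∧ Module.finrank ℂ ↥S = d ∧
    ∀ z ∈ S, z ≠ 0 → 0 < (Aform m N h B z z).re}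

/-- `m⁻_{h,ω}`: the maximal dimension of a complex subspace of `W̃_ω` on which
`z̃ ↦ 𝒜_{h,ω}(z̃, z̃)` is negative definite. -/
noncomputable def mMinus (m N : ℕ) (h : ℝ) (ω : ℂ)
    (B : ℤ → Matrix (Fin m ⊕ Fin m) (Fin m ⊕ Fin m) ℝ) : ℕ :=
  sSup {d : ℕ | ∃ S : Submodule ℂ (V m), S ≤ Wt m N ω ∧ Module.finrank ℂ ↥S = d ∧
    ∀ z ∈ S, z ≠ 0 → (Aform m N h B z z).re < 0}




lemma negJ_mulVec {m : ℕ} (u v : Fin m → ℂ) :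
    (-(Jm m)).mulVec (Sum.elim u v) = Sum.elim v (-u) := by
  have h : -(Jm m) = Matrix.fromBlocks 0 1 (-1) 0 := by
    unfold Jm
    ext (i | i) (j | j) <;> simp [Matrix.fromBlocks]
  rw [h, Matrix.fromBlocks_mulVec]
  simp [Matrix.neg_mulVec]

lemma key (N : ℕ) (ω t : ℂ) (u : ℤ → ℂ)
    (hrec : ∀ n : ℤ, u (n + 2) = t * u (n + 1) - u n)
    (hper : ∀ n : ℤ, u (n + (N : ℤ)) = ω * u n)
    (n0 : ℤ) (hu : u n0 ≠ 0) :
    ∃ lam : ℂ, lam ≠ 0 ∧ lam ^ 2 - t * lam + 1 = 0 ∧ lam ^ N = ω := by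
  obtain ⟨s, hs⟩ : ∃ s : ℂ, s ^ 2 = t ^ 2 - 4 := IsAlgClosed.exists_pow_nat_eq _ two_pos
  set l1 : ℂ := (t + s) / 2 with hl1
  set l2 : ℂ := (t - s) / 2 with hl2
  have hmul : l1 * l2 = 1 := by
    rw [hl1, hl2]; field_simp; linear_combination -hs
  have hsum : l1 + l2 = t := by rw [hl1, hl2]; ring
  have h1 : l1 ≠ 0 := left_ne_zero_of_mul_eq_one hmul
  have h2 : l2 ≠ 0 := right_ne_zero_of_mul_eq_one hmul
  have hchar1 : l1 ^ 2 - t * l1 + 1 = 0 := by linear_combination l1 * hsum - hmul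
  have hchar2 : l2 ^ 2 - t * l2 + 1 = 0 := by linear_combination l2 * hsum - hmul
  set w : ℤ → ℂ := fun n => u (n + 1) - l1 * u n with hwdef
  have hw : ∀ n : ℤ, w (n + 1) = l2 * w n := by
    intro n
    show u (n + 1 + 1) - l1 * u (n + 1) = l2 * (u (n + 1) - l1 * u n)
    rw [show n + 1 + 1 = n + 2 by ring, hrec n]
    linear_combination (-(u (n + 1))) * hsum + u n * hmul
  have hwz : ∀ n : ℤ, w n = l2 ^ n * w 0 := by
    intro n
    induction n using Int.induction_on with
    | zero => simp
    | succ k ih => rw [hw, ih, zpow_add_one₀ h2]; ring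
    | pred k ih =>
      have h' := hw (-(k : ℤ) - 1)
      rw [show (-(k : ℤ) - 1 + 1) = -(k : ℤ) by ring] at h'
      have hx : w (-(k : ℤ) - 1) = l2⁻¹ * w (-(k : ℤ)) := by
        rw [h', inv_mul_cancel_left₀ h2]
      rw [hx, ih, zpow_sub_one₀ h2]; ring
  have hwper : w ((0 : ℤ) + (N : ℤ)) = ω * w 0 := by
    show u (0 + (N : ℤ) + 1) - l1 * u (0 + (N : ℤ)) = ω * (u (0 + 1) - l1 * u 0)
    rw [show (0 : ℤ) + (N : ℤ) + 1 = (0 + 1) + (N : ℤ) by ring, hper (0 + 1), hper 0]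
    ring
  by_cases hw0 : w 0 = 0
  · have hu1 : ∀ n : ℤ, u (n + 1) = l1 * u n := by
      intro n
      have hn := hwz n
      rw [hw0, mul_zero] at hn
      have : u (n + 1) - l1 * u n = 0 := hn
      linear_combination this
    have huz : ∀ n : ℤ, u n = l1 ^ n * u 0 := by
      intro n
      induction n using Int.induction_on with
      | zero => simp
      | succ k ih => rw [hu1, ih, zpow_add_one₀ h1]; ring
      | pred k ih =>
        have h' := hu1 (-(k : ℤ) - 1)
        rw [show (-(k : ℤ) - 1 + 1) = -(k : ℤ) by ring] at h'
        have hx : u (-(k : ℤ) - 1) = l1⁻¹ * u (-(k : ℤ)) := by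
          rw [h', inv_mul_cancel_left₀ h1]
        rw [hx, ih, zpow_sub_one₀ h1]; ring
    have hu0 : u 0 ≠ 0 := by
      intro h0
      apply hu
      rw [huz n0, h0, mul_zero]
    have hN : l1 ^ (N : ℤ) * u 0 = ω * u 0 := by
      rw [← huz (N : ℤ)]
      have hp := hper 0
      rw [zero_add] at hp
      exact hp
    have : l1 ^ (N : ℤ) = ω := mul_right_cancel₀ hu0 hN
    exact ⟨l1, h1, hchar1, by rw [← this, zpow_natCast]⟩
  · have hN : l2 ^ (N : ℤ) * w 0 = ω * w 0 := by
      rw [← hwz (N : ℤ)]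
      rw [zero_add] at hwper
      exact hwper
    have : l2 ^ (N : ℤ) = ω := mul_right_cancel₀ hw0 hN
    exact ⟨l2, h2, hchar2, by rw [← this, zpow_natCast]⟩

open Real in
lemma trig (N : ℕ) (hN : 1 ≤ N) (h : ℝ) (hh : 0 < h) (α : ℝ) (Λ lam : ℂ)
    (hlam : lam ≠ 0)
    (hchar : lam ^ 2 - (2 - ((h : ℂ) * Λ) ^ 2) * lam + 1 = 0)
    (hpow : lam ^ N = Complex.exp (Complex.I * (α : ℂ))) :
    ∃ k : ℕ, k < N ∧
      (Λ = ((2 * Real.sin (((k : ℝ) * Real.pi + α / 2) / N) / h : ℝ) : ℂ) ∨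
       Λ = ((-(2 * Real.sin (((k : ℝ) * Real.pi + α / 2) / N)) / h : ℝ) : ℂ)) := by
  have hNne : (N : ℝ) ≠ 0 := by positivity
  have hhC : (h : ℂ) ≠ 0 := by exact_mod_cast hh.ne'
  have habsN : ‖lam‖ ^ N = 1 := by
    rw [← norm_pow, hpow]
    rw [Complex.norm_exp]
    norm_num [Complex.mul_re]
  have habs : ‖lam‖ = 1 := by
    rcases lt_trichotomy (‖lam‖) 1 with hlt | he | hgt
    · have := pow_lt_one₀ (norm_nonneg lam) hlt (by omega : N ≠ 0)
      rw [habsN] at this; exact absurd this (lt_irrefl 1)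
    · exact he
    · have := one_lt_pow₀ hgt (by omega : N ≠ 0)
      rw [habsN] at this; exact absurd this (lt_irrefl 1)
  set θ := lam.arg with hθ
  have hlamθ : lam = Complex.exp ((θ : ℂ) * Complex.I) := by
    conv_lhs => rw [← Complex.norm_mul_exp_arg_mul_I lam]
    rw [habs]
    simp [hθ]
  have hee : Complex.exp ((N : ℂ) * ((θ : ℂ) * Complex.I)) = Complex.exp (Complex.I * (α : ℂ)) := by
    rw [← hpow, hlamθ, ← Complex.exp_nat_mul]
  obtain ⟨j, hj⟩ := Complex.exp_eq_exp_iff_exists_int.mp hee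
  have hreal : (N : ℝ) * θ = α + j * (2 * π) := by
    have := congrArg Complex.im hj
    simp [Complex.mul_im, Complex.add_im, Complex.mul_re] at this
    push_cast at this ⊢
    linarith [this]
  have hinv : lam⁻¹ = Complex.exp (-((θ : ℂ) * Complex.I)) := by
    rw [hlamθ, ← Complex.exp_neg]
  have hsumc : lam + lam⁻¹ = ((2 * Real.cos θ : ℝ) : ℂ) := by
    rw [hinv, hlamθ,
      show -((θ : ℂ) * Complex.I) = ((-θ : ℝ) : ℂ) * Complex.I by push_cast; ring,
      Complex.exp_mul_I, Complex.exp_mul_I,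
      ← Complex.ofReal_cos, ← Complex.ofReal_sin,
      ← Complex.ofReal_cos, ← Complex.ofReal_sin,
      Real.cos_neg, Real.sin_neg]
    push_cast
    ring
  have ha2 : ((h : ℂ) * Λ) ^ 2 = (((2 * Real.sin (θ / 2)) : ℝ) : ℂ) ^ 2 := by
    have hinv2 : lam * lam⁻¹ = 1 := mul_inv_cancel₀ hlam
    have h1 : ((h : ℂ) * Λ) ^ 2 = 2 - (lam + lam⁻¹) := by
      linear_combination lam⁻¹ * hchar - (((h:ℂ)*Λ)^2 - 2 + lam) * hinv2
    have h2 : (2 * Real.sin (θ / 2)) ^ 2 = 2 - 2 * Real.cos θ := by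
      have hc := Real.cos_two_mul (θ/2)
      rw [show 2*(θ/2) = θ by ring] at hc
      nlinarith [hc, Real.sin_sq_add_cos_sq (θ/2)]
    rw [h1, hsumc, ← Complex.ofReal_pow, h2]
    push_cast
    ring
  have hcases : (h : ℂ) * Λ = (((2 * Real.sin (θ / 2)) : ℝ) : ℂ) ∨
      (h : ℂ) * Λ = -(((2 * Real.sin (θ / 2)) : ℝ) : ℂ) := by
    have : ((h : ℂ) * Λ - (((2 * Real.sin (θ / 2)) : ℝ) : ℂ)) *
        ((h : ℂ) * Λ + (((2 * Real.sin (θ / 2)) : ℝ) : ℂ)) = 0 := by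
      linear_combination ha2
    rcases mul_eq_zero.mp this with h' | h'
    · left; linear_combination h'
    · right; linear_combination h'
  set r : ℤ := j % (N : ℤ) with hrdef
  set q : ℤ := j / (N : ℤ) with hqdef
  have hNZ : (0 : ℤ) < (N : ℤ) := by exact_mod_cast hN
  have hr0 : 0 ≤ r := Int.emod_nonneg j (by omega)
  have hrN : r < (N : ℤ) := Int.emod_lt_of_pos j hNZ
  have hjq : j = (N : ℤ) * q + r := (Int.mul_ediv_add_emod j (N : ℤ)).symm
  refine ⟨r.toNat, by omega, ?_⟩
  have hkr : ((r.toNat : ℕ) : ℝ) = (r : ℝ) := by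
    exact_mod_cast Int.toNat_of_nonneg hr0
  have hθ2 : θ / 2 = (((r : ℝ)) * π + α / 2) / N + (q : ℤ) * π := by
    have hjr : (j : ℝ) = (N : ℝ) * (q : ℝ) + (r : ℝ) := by exact_mod_cast hjq
    field_simp
    linear_combination hreal + 2 * π * hjr
  have hsin : Real.sin (θ / 2) = (-1 : ℝ) ^ q * Real.sin (((r : ℝ) * π + α / 2) / N) := by
    rw [hθ2, Real.sin_add_int_mul_pi]
  have hq1 : (-1 : ℝ) ^ q = 1 ∨ (-1 : ℝ) ^ q = -1 := by
    rcases Int.even_or_odd q with hq | hq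
    · left; exact hq.neg_one_zpow
    · right; exact hq.neg_one_zpow
  have hΛeq : ∀ c : ℝ, (h : ℂ) * Λ = ((c : ℝ) : ℂ) → Λ = ((c / h : ℝ) : ℂ) := by
    intro c hc
    push_cast
    field_simp at hc ⊢
    linear_combination hc
  rw [hkr]
  rcases hcases with hc | hc <;> rcases hq1 with hq | hq
  · rw [hsin, hq, one_mul] at hc
    left; exact hΛeq _ hc
  · rw [hsin, hq] at hc
    right
    have : (h : ℂ) * Λ = ((-(2 * Real.sin (((r:ℝ) * π + α / 2) / N)) : ℝ) : ℂ) := by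
      push_cast at hc ⊢; linear_combination hc
    exact hΛeq _ this
  · rw [hsin, hq, one_mul] at hc
    right
    have : (h : ℂ) * Λ = ((-(2 * Real.sin (((r:ℝ) * π + α / 2) / N)) : ℝ) : ℂ) := by
      push_cast at hc ⊢; linear_combination hc
    exact hΛeq _ this
  · rw [hsin, hq] at hc
    left
    have : (h : ℂ) * Λ = (((2 * Real.sin (((r:ℝ) * π + α / 2) / N)) : ℝ) : ℂ) := by
      push_cast at hc ⊢; linear_combination hc
    exact hΛeq _ this

lemma comps {m : ℕ} (h : ℝ) (Λ : ℂ) (z : V m) (n : ℤ)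
    (heq : (h : ℂ)⁻¹ • ((-(Jm m)).mulVec (zf z (n + 1) - zf z n)) = Λ • zt z n) (i : Fin m) :
    (h : ℂ)⁻¹ * (z.2 (n + 1) i - z.2 n i) = Λ * z.1 (n + 1) i ∧
    (h : ℂ)⁻¹ * (-(z.1 (n + 1) i - z.1 n i)) = Λ * z.2 n i := by
  have hsub : zf z (n + 1) - zf z n =
      Sum.elim (fun i' => z.1 (n + 1) i' - z.1 n i') (fun i' => z.2 (n + 1) i' - z.2 n i') := by
    funext j
    cases j with
    | inl i' => simp [zf]
    | inr i' => simp [zf]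
  rw [hsub, negJ_mulVec] at heq
  constructor
  · have := congrFun heq (Sum.inl i)
    simpa [zt] using this
  · have := congrFun heq (Sum.inr i)
    simpa [zt] using this


/-- `Λ` is an eigenvalue of the operator `z̃ ↦ −J(z_{n+1}−z_n)/h` on `W̃_ω`
iff `Λ = ±2 sin(α_k)/h` for some `0 ≤ k ≤ N−1`, where `α_k = (kπ + α/2)/N`. -/
theorem stmt10 (m N : ℕ) (hm : 1 ≤ m) (hN : 1 ≤ N) (h : ℝ) (hh : 0 < h)
    (α : ℝ) (hα : α ∈ Set.Ico (0 : ℝ) (2 * Real.pi))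
    (ω : ℂ) (hωα : ω = Complex.exp (Complex.I * α)) (Λ : ℂ) :
    (∃ z : V m, z ∈ Wt m N ω ∧ z ≠ 0 ∧
      ∀ n : ℤ, (h : ℂ)⁻¹ • ((-(Jm m)).mulVec (zf z (n + 1) - zf z n)) = Λ • zt z n) ↔
    (∃ k : ℕ, k < N ∧
      (Λ = ((2 * Real.sin (((k : ℝ) * Real.pi + α / 2) / N) / h : ℝ) : ℂ) ∨
       Λ = ((-(2 * Real.sin (((k : ℝ) * Real.pi + α / 2) / N)) / h : ℝ) : ℂ))) := by
  have hhC : (h : ℂ) ≠ 0 := by exact_mod_cast hh.ne'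
  have hNr : (N : ℝ) ≠ 0 := by positivity
  constructor
  · rintro ⟨z, hzW, hz0, heq⟩
    obtain ⟨n0, i, hne⟩ : ∃ n i, z.1 n i ≠ 0 ∨ z.2 n i ≠ 0 := by
      by_contra hc
      push_neg at hc
      apply hz0
      have h1 : z.1 = 0 := funext fun n => funext fun i => (hc n i).1
      have h2 : z.2 = 0 := funext fun n => funext fun i => (hc n i).2
      exact Prod.ext h1 h2
    set u : ℤ → ℂ := fun n => z.1 n i with hudef
    set v : ℤ → ℂ := fun n => z.2 n i with hvdef
    set a : ℂ := (h : ℂ) * Λ with hadef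
    have E := fun n => comps h Λ z n (heq n) i
    have F1 : ∀ n : ℤ, u (n + 1) = u n - a * v n := by
      intro n
      have e2 := (E n).2
      show z.1 (n+1) i = z.1 n i - a * z.2 n i
      field_simp at e2
      linear_combination -e2
    have F2 : ∀ n : ℤ, v (n + 1) = v n + a * u (n + 1) := by
      intro n
      have e1 := (E n).1
      show z.2 (n+1) i = z.2 n i + a * z.1 (n+1) i
      field_simp at e1
      linear_combination e1
    have hrecu : ∀ n : ℤ, u (n + 2) = (2 - a ^ 2) * u (n + 1) - u n := by
      intro n
      have f1 := F1 (n + 1)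
      rw [show n + 1 + 1 = n + 2 by ring] at f1
      linear_combination f1 - a * (F2 n) - (F1 n)
    have hrecv : ∀ n : ℤ, v (n + 2) = (2 - a ^ 2) * v (n + 1) - v n := by
      intro n
      have f2 := F2 (n + 1)
      have f1 := F1 (n + 1)
      rw [show n + 1 + 1 = n + 2 by ring] at f2 f1
      linear_combination f2 + a * f1 - (F2 n)
    have hperu : ∀ n : ℤ, u (n + (N : ℤ)) = ω * u n := by
      intro n
      have := congrFun (hzW n).1 i
      simpa using this
    have hperv : ∀ n : ℤ, v (n + (N : ℤ)) = ω * v n := by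
      intro n
      have := congrFun (hzW n).2 i
      simpa using this
    rcases hne with hne | hne
    · obtain ⟨lam, hl0, hchar, hpow⟩ := key N ω (2 - a ^ 2) u hrecu hperu n0 hne
      rw [hωα] at hpow
      exact trig N hN h hh α Λ lam hl0 hchar hpow
    · obtain ⟨lam, hl0, hchar, hpow⟩ := key N ω (2 - a ^ 2) v hrecv hperv n0 hne
      rw [hωα] at hpow
      exact trig N hN h hh α Λ lam hl0 hchar hpow
  · rintro ⟨k, hk, hΛ⟩
    set θk : ℝ := ((k : ℝ) * Real.pi + α / 2) / N with hθk
    set s : ℝ := Real.sin θk with hs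
    set lam : ℂ := Complex.exp (((2 * θk : ℝ) : ℂ) * Complex.I) with hlamdef
    have hlam0 : lam ≠ 0 := Complex.exp_ne_zero _
    have hNθ : ((N : ℝ)) * (2 * θk) = α + (k : ℝ) * (2 * Real.pi) := by
      rw [hθk]; field_simp; ring
    have hpow : lam ^ N = ω := by
      rw [hlamdef, ← Complex.exp_nat_mul, hωα]
      have hc : (N : ℂ) * (((2 * θk : ℝ) : ℂ) * Complex.I)
          = Complex.I * (α : ℂ) + (k : ℂ) * (2 * (Real.pi : ℂ) * Complex.I) := by
        have hx := congrArg (fun x : ℝ => (x : ℂ)) hNθ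
        push_cast at hx
        push_cast
        linear_combination Complex.I * hx
      rw [hc, Complex.exp_add]
      have : Complex.exp ((k : ℂ) * (2 * (Real.pi : ℂ) * Complex.I)) = 1 := by
        have := Complex.exp_int_mul_two_pi_mul_I (k : ℤ)
        push_cast at this ⊢
        exact this
      rw [this, mul_one]
    have hA : (h : ℂ) * Λ = ((2 * s : ℝ) : ℂ) ∨ (h : ℂ) * Λ = ((-(2 * s) : ℝ) : ℂ) := by
      rcases hΛ with hc | hc
      · left; rw [hc]; push_cast; field_simp; try ring
      · right; rw [hc]; push_cast; field_simp; try ring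
    have ha2 : ((h : ℂ) * Λ) ^ 2 = ((4 * s ^ 2 : ℝ) : ℂ) := by
      rcases hA with hc | hc <;> rw [hc] <;> push_cast <;> ring
    -- characteristic equation
    set lamInv : ℂ := Complex.exp (-(((2 * θk : ℝ) : ℂ) * Complex.I)) with hlaminv
    have hmulinv : lam * lamInv = 1 := by
      rw [hlamdef, hlaminv, ← Complex.exp_add]
      simp
    have hsumc : lam + lamInv = ((2 * Real.cos (2 * θk) : ℝ) : ℂ) := by
      rw [hlamdef, hlaminv,
        show -(((2 * θk : ℝ) : ℂ) * Complex.I) = ((-(2 * θk) : ℝ) : ℂ) * Complex.I by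
          push_cast; ring,
        Complex.exp_mul_I, Complex.exp_mul_I,
        ← Complex.ofReal_cos, ← Complex.ofReal_sin,
        ← Complex.ofReal_cos, ← Complex.ofReal_sin,
        Real.cos_neg, Real.sin_neg]
      push_cast
      ring
    have hcos : 2 * Real.cos (2 * θk) = 2 - 4 * s ^ 2 := by
      have hc := Real.cos_two_mul θk
      nlinarith [hc, Real.sin_sq_add_cos_sq θk]
    have hsum2 : lam + lamInv = 2 - ((h : ℂ) * Λ) ^ 2 := by
      rw [hsumc, ha2, hcos]
      push_cast
      ring
    have hchar : lam ^ 2 - (2 - ((h : ℂ) * Λ) ^ 2) * lam + 1 = 0 := by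
      rw [← hsum2]
      linear_combination -hmulinv
    -- choose eigenvector coefficients
    obtain ⟨c, d, hc0, hI1, hI2⟩ : ∃ c d : ℂ, c ≠ 0 ∧
        d * (lam - 1) = ((h : ℂ) * Λ) * c * lam ∧
        -(c * (lam - 1)) = ((h : ℂ) * Λ) * d := by
      by_cases haz : (h : ℂ) * Λ = 0
      · have hs0 : s = 0 := by
          rcases hA with hc | hc <;> rw [haz] at hc
          · have : (2 * s : ℝ) = 0 := by exact_mod_cast hc.symm
            linarith
          · have : (-(2 * s) : ℝ) = 0 := by exact_mod_cast hc.symm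
            linarith
        have hθpos : 0 ≤ θk := by
          rw [hθk]
          have := hα.1
          positivity
        have hθlt : θk < Real.pi := by
          rw [hθk, div_lt_iff₀ (by positivity : (0:ℝ) < (N:ℝ))]
          have h1 : (k : ℝ) ≤ (N : ℝ) - 1 := by
            have : (k : ℝ) + 1 ≤ (N : ℝ) := by exact_mod_cast hk
            linarith
          have h2 : α / 2 < Real.pi := by
            have := hα.2
            linarith
          nlinarith [Real.pi_pos]
        have hθ0 : θk = 0 :=
          (Real.sin_eq_zero_iff_of_lt_of_lt (by linarith [Real.pi_pos]) hθlt).mp hs0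
        have hlam1 : lam = 1 := by
          rw [hlamdef, hθ0]
          simp
        exact ⟨1, 0, one_ne_zero, by rw [haz]; ring, by rw [haz, hlam1]; ring⟩
      · exact ⟨(h : ℂ) * Λ, 1 - lam, haz, by linear_combination -hchar, by ring⟩
    -- build the solution
    set P : Fin m → ℂ := Pi.single (⟨0, hm⟩ : Fin m) (1 : ℂ) with hP
    refine ⟨⟨fun n i' => lam ^ n * c * P i', fun n i' => lam ^ n * d * P i'⟩, ?_, ?_, ?_⟩
    · intro n
      constructor
      · funext i'
        show lam ^ (n + (N : ℤ)) * c * P i' = (ω • fun i' => lam ^ n * c * P i') i'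
        rw [zpow_add₀ hlam0, zpow_natCast, hpow]
        simp only [Pi.smul_apply, smul_eq_mul]
        ring
      · funext i'
        show lam ^ (n + (N : ℤ)) * d * P i' = (ω • fun i' => lam ^ n * d * P i') i'
        rw [zpow_add₀ hlam0, zpow_natCast, hpow]
        simp only [Pi.smul_apply, smul_eq_mul]
        ring
    · intro h0
      have h1 := congrFun (congrFun (congrArg Prod.fst h0) 0) ⟨0, hm⟩
      simp only [hP, Pi.single_eq_same, mul_one, zpow_zero, one_mul, Pi.zero_apply] at h1
      exact hc0 h1
    · intro n
      have hinvh : (h : ℂ) * (h : ℂ)⁻¹ = 1 := mul_inv_cancel₀ hhC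
      have hsub : zf (⟨fun n i' => lam ^ n * c * P i', fun n i' => lam ^ n * d * P i'⟩ : V m) (n + 1)
          - zf (⟨fun n i' => lam ^ n * c * P i', fun n i' => lam ^ n * d * P i'⟩ : V m) n =
          Sum.elim (fun i' => (lam ^ (n + 1) - lam ^ n) * c * P i')
            (fun i' => (lam ^ (n + 1) - lam ^ n) * d * P i') := by
        funext j
        cases j with
        | inl i' => simp only [Pi.sub_apply, zf, Sum.elim_inl]; ring
        | inr i' => simp only [Pi.sub_apply, zf, Sum.elim_inr]; ring
      rw [hsub, negJ_mulVec]
      funext j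
      cases j with
      | inl i' =>
        simp only [Pi.smul_apply, Sum.elim_inl, smul_eq_mul, zt]
        rw [zpow_add_one₀ hlam0]
        linear_combination ((h : ℂ)⁻¹ * lam ^ n * P i') * hI1
          + (Λ * c * lam * lam ^ n * P i') * hinvh
      | inr i' =>
        simp only [Pi.smul_apply, Sum.elim_inr, smul_eq_mul, zt, Pi.neg_apply]
        rw [zpow_add_one₀ hlam0]
        linear_combination ((h : ℂ)⁻¹ * lam ^ n * P i') * hI2
          + (Λ * d * lam ^ n * P i') * hinvh


end DHS
end

section
/- Let m ≥ 1 and t₀ < T₀ be reals. Let B : [0,1] × [t₀,T₀] → {2m×2m real symmetric matrices} be continuous, and let z : [0,1] × [t₀,T₀] → ℂ^{2m}, (s,t) ↦ z_s(t), be continuous and such that for each s ∈ [0,1] the map t ↦ z_s(t) is continuously differentiable with z_s'(t) = J·B(s,t)·z_s(t) for all t. For N ≥ 1 set h = (T₀−t₀)/N and t_n = t₀ + nh. Then for every ε > 0 there exists N₀ such that for all N ≥ N₀ and all s ∈ [0,1]: every sequence z_{s,0}, …, z_{s,N} in ℂ^{2m}, written z_{s,n} = (x_{s,n}, y_{s,n})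 with x_{s,n}, y_{s,n} ∈ ℂ^m, satisfying z_{s,0} = z_s(t₀) and z_{s,n+1} = z_{s,n} + h·J·B(s,t_n)·(x_{s,n+1}, y_{s,n}) for 0 ≤ n ≤ N−1, satisfies max_{0 ≤ n ≤ N} ‖z_s(t_n) − z_{s,n}‖ ≤ ε; in particular the error bound is uniform in the parameter s. -/
open Matrix

/-- The standard symplectic matrix `J = [[0, -I_m],[I_m, 0]]` in `m × m` blocks. -/
def Jm (m : ℕ) : Matrix (Fin m ⊕ Fin m) (Fin m ⊕ Fin m) ℂ :=
  Matrix.fromBlocks 0 (-1) 1 0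

/-- `glue u v` is the vector of `ℂ^{2m}` whose first half (the `x`-components) is taken
from `u` and whose second half (the `y`-components) is taken from `v`. -/
noncomputable def glue {m : ℕ} (u v : EuclideanSpace ℂ (Fin m ⊕ Fin m)) :
    EuclideanSpace ℂ (Fin m ⊕ Fin m) :=
  (EuclideanSpace.equiv (Fin m ⊕ Fin m) ℂ).symm
    (Sum.elim (fun a => u (Sum.inl a)) (fun a => v (Sum.inr a)))

/-- Multiplication of a `2m × 2m` complex matrix with a vector of `ℂ^{2m}`. -/
noncomputable def mvE {m : ℕ} (M : Matrix (Fin m ⊕ Fin m) (Fin m ⊕ Fin m) ℂ)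
    (v : EuclideanSpace ℂ (Fin m ⊕ Fin m)) : EuclideanSpace ℂ (Fin m ⊕ Fin m) :=
  (EuclideanSpace.equiv (Fin m ⊕ Fin m) ℂ).symm
    (M.mulVec ((EuclideanSpace.equiv (Fin m ⊕ Fin m) ℂ) v))

section Helpers

variable {m : ℕ}

lemma mvE_apply (M : Matrix (Fin m ⊕ Fin m) (Fin m ⊕ Fin m) ℂ)
    (v : EuclideanSpace ℂ (Fin m ⊕ Fin m)) (i) : mvE M v i = M.mulVec v i := rfl

lemma glue_apply_inl (u v : EuclideanSpace ℂ (Fin m ⊕ Fin m)) (a) :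
    glue u v (Sum.inl a) = u (Sum.inl a) := rfl
lemma glue_apply_inr (u v : EuclideanSpace ℂ (Fin m ⊕ Fin m)) (a) :
    glue u v (Sum.inr a) = v (Sum.inr a) := rfl

lemma glue_self (v : EuclideanSpace ℂ (Fin m ⊕ Fin m)) : glue v v = v := by
  ext i; cases i <;> rfl

lemma glue_sub (u v u' v' : EuclideanSpace ℂ (Fin m ⊕ Fin m)) :
    glue u v - glue u' v' = glue (u - u') (v - v') := by
  ext i; cases i <;> rfl

lemma coord_le (v : EuclideanSpace ℂ (Fin m ⊕ Fin m)) (i) : ‖v i‖ ≤ ‖v‖ := by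
  rw [EuclideanSpace.norm_eq]
  have h1 : ‖v i‖ = Real.sqrt (‖v i‖ ^ 2) := by
    rw [Real.sqrt_sq (norm_nonneg _)]
  rw [h1]
  apply Real.sqrt_le_sqrt
  exact Finset.single_le_sum (f := fun j => ‖v j‖ ^ 2) (fun j _ => by positivity) (Finset.mem_univ i)

lemma norm_le_sum_coord (v : EuclideanSpace ℂ (Fin m ⊕ Fin m)) : ‖v‖ ≤ ∑ i, ‖v i‖ := by
  rw [EuclideanSpace.norm_eq]
  have : Real.sqrt ((∑ i, ‖v i‖)^2) = ∑ i, ‖v i‖ := by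
    rw [Real.sqrt_sq (by positivity)]
  rw [← this]
  apply Real.sqrt_le_sqrt
  exact Finset.sum_sq_le_sq_sum_of_nonneg (fun i _ => norm_nonneg _)

/-- The entrywise `ℓ¹`-norm of a complex matrix. -/
noncomputable def cnorm {m : ℕ} (M : Matrix (Fin m ⊕ Fin m) (Fin m ⊕ Fin m) ℂ) : ℝ :=
  ∑ i, ∑ j, ‖M i j‖

lemma cnorm_nonneg (M : Matrix (Fin m ⊕ Fin m) (Fin m ⊕ Fin m) ℂ) : 0 ≤ cnorm M := by
  unfold cnorm; positivity

lemma norm_mvE_le (M : Matrix (Fin m ⊕ Fin m) (Fin m ⊕ Fin m) ℂ)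
    (v : EuclideanSpace ℂ (Fin m ⊕ Fin m)) : ‖mvE M v‖ ≤ cnorm M * ‖v‖ := by
  calc ‖mvE M v‖ ≤ ∑ i, ‖mvE M v i‖ := norm_le_sum_coord _
    _ ≤ ∑ i, ∑ j, ‖M i j‖ * ‖v‖ := by
        apply Finset.sum_le_sum
        intro i _
        rw [mvE_apply]
        calc ‖M.mulVec v i‖ = ‖∑ j, M i j * v j‖ := rfl
          _ ≤ ∑ j, ‖M i j * v j‖ := norm_sum_le _ _
          _ ≤ ∑ j, ‖M i j‖ * ‖v‖ := by
              apply Finset.sum_le_sum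
              intro j _
              rw [norm_mul]
              exact mul_le_mul_of_nonneg_left (coord_le v j) (norm_nonneg _)
    _ = cnorm M * ‖v‖ := by rw [cnorm, Finset.sum_mul]; exact Finset.sum_congr rfl (fun i _ => (Finset.sum_mul _ _ _).symm)

lemma mvE_sub_right (M : Matrix (Fin m ⊕ Fin m) (Fin m ⊕ Fin m) ℂ)
    (u v : EuclideanSpace ℂ (Fin m ⊕ Fin m)) : mvE M u - mvE M v = mvE M (u - v) := by
  ext i
  show (M *ᵥ u) i - (M *ᵥ v) i = (M *ᵥ (u - v)) i
  rw [Matrix.mulVec_sub]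
  rfl

lemma mvE_sub_left (M M' : Matrix (Fin m ⊕ Fin m) (Fin m ⊕ Fin m) ℂ)
    (v : EuclideanSpace ℂ (Fin m ⊕ Fin m)) : mvE M v - mvE M' v = mvE (M - M') v := by
  ext i
  show M.mulVec v i - M'.mulVec v i = (M - M').mulVec v i
  rw [Matrix.sub_mulVec]
  rfl

lemma norm_glue_le (u v : EuclideanSpace ℂ (Fin m ⊕ Fin m)) : ‖glue u v‖ ≤ ‖u‖ + ‖v‖ := by
  have h2 : ‖glue u v‖^2 ≤ ‖u‖^2 + ‖v‖^2 := by
    rw [EuclideanSpace.norm_eq, Real.sq_sqrt (by positivity), EuclideanSpace.norm_eq u,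
      EuclideanSpace.norm_eq v, Real.sq_sqrt (by positivity), Real.sq_sqrt (by positivity)]
    rw [Fintype.sum_sum_type]
    apply add_le_add
    · rw [Fintype.sum_sum_type]
      simp only [glue_apply_inl]
      exact le_add_of_nonneg_right (by positivity)
    · rw [Fintype.sum_sum_type]
      simp only [glue_apply_inr]
      exact le_add_of_nonneg_left (by positivity)
  nlinarith [norm_nonneg (glue u v), norm_nonneg u, norm_nonneg v]

end Helpers

set_option maxHeartbeats 1000000 in
/-- error estimate, uniform in the parameter `s ∈ [0,1]`, for the
semi-implicit Euler scheme applied to the linear Hamiltonian systems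
`z_s' = J B(s,t) z_s` with continuous symmetric coefficients. -/
theorem stmt13 (m : ℕ) (hm : 1 ≤ m) (t₀ T₀ : ℝ) (hT : t₀ < T₀)
    (B : ℝ → ℝ → Matrix (Fin m ⊕ Fin m) (Fin m ⊕ Fin m) ℝ)
    (hBsym : ∀ s ∈ Set.Icc (0 : ℝ) 1, ∀ t ∈ Set.Icc t₀ T₀, (B s t)ᵀ = B s t)
    (hBcont : ContinuousOn (fun p : ℝ × ℝ => B p.1 p.2)
      (Set.Icc (0 : ℝ) 1 ×ˢ Set.Icc t₀ T₀))
    (z : ℝ → ℝ → EuclideanSpace ℂ (Fin m ⊕ Fin m))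
    (hzcont : ContinuousOn (fun p : ℝ × ℝ => z p.1 p.2)
      (Set.Icc (0 : ℝ) 1 ×ˢ Set.Icc t₀ T₀))
    (hz : ∀ s ∈ Set.Icc (0 : ℝ) 1, ∀ t ∈ Set.Icc t₀ T₀,
      HasDerivAt (z s) (mvE (Jm m * (B s t).map (fun a => (a : ℂ))) (z s t)) t) :
    ∀ ε > (0 : ℝ), ∃ N₀ : ℕ, ∀ N : ℕ, N₀ ≤ N → 1 ≤ N →
      ∀ s ∈ Set.Icc (0 : ℝ) 1,
        ∀ zs : ℕ → EuclideanSpace ℂ (Fin m ⊕ Fin m),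
          zs 0 = z s t₀ →
          (∀ n : ℕ, n < N →
            zs (n + 1) = zs n + (((T₀ - t₀) / N : ℝ) : ℂ) •
              mvE (Jm m * (B s (t₀ + (n : ℝ) * ((T₀ - t₀) / N))).map (fun a => (a : ℂ)))
                (glue (zs (n + 1)) (zs n))) →
          ∀ n : ℕ, n ≤ N → ‖z s (t₀ + (n : ℝ) * ((T₀ - t₀) / N)) - zs n‖ ≤ ε := by
  intro ε hε
  set K : Set (ℝ × ℝ) := Set.Icc (0 : ℝ) 1 ×ˢ Set.Icc t₀ T₀ with hKdef
  set Δ : ℝ := T₀ - t₀ with hΔdef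
  have hΔ : 0 < Δ := sub_pos.2 hT
  set A : ℝ × ℝ → Matrix (Fin m ⊕ Fin m) (Fin m ⊕ Fin m) ℂ :=
    fun p => Jm m * (B p.1 p.2).map (fun a => (a : ℂ)) with hAdef
  have hK : IsCompact K := isCompact_Icc.prod isCompact_Icc
  have hKne : K.Nonempty := ⟨(0, t₀), ⟨⟨le_refl 0, zero_le_one⟩, ⟨le_refl t₀, hT.le⟩⟩⟩
  -- continuity of the entries of A
  have hAentry : ∀ i j : (Fin m ⊕ Fin m), ContinuousOn (fun p => A p i j) K := by
    intro i j
    have : ∀ k : (Fin m ⊕ Fin m), ContinuousOn (fun p : ℝ × ℝ => ((B p.1 p.2 k j : ℝ) : ℂ)) K := by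
      intro k
      have h1 : ContinuousOn (fun p : ℝ × ℝ => B p.1 p.2 k j) K := by
        exact
          ((continuous_apply j).comp (continuous_apply k)).comp_continuousOn hBcont
      exact Complex.continuous_ofReal.comp_continuousOn h1
    have : ContinuousOn (fun p : ℝ × ℝ => ∑ k : (Fin m ⊕ Fin m), Jm m i k * ((B p.1 p.2 k j : ℝ) : ℂ)) K :=
      continuousOn_finset_sum _ (fun k _ => continuousOn_const.mul (this k))
    refine this.congr ?_
    intro p _
    simp only [hAdef, Matrix.mul_apply, Matrix.map_apply]
  -- A as a function into a Pi (metric) type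
  set Af : ℝ × ℝ → (((Fin m ⊕ Fin m) × (Fin m ⊕ Fin m)) → ℂ) := fun p ij => A p ij.1 ij.2 with hAfdef
  have hAfcont : ContinuousOn Af K := continuousOn_pi.2 (fun ij => hAentry ij.1 ij.2)
  -- continuity of cnorm ∘ A
  have hcnormA : ContinuousOn (fun p => cnorm (A p)) K := by
    unfold cnorm
    exact continuousOn_finset_sum _ (fun i _ =>
      continuousOn_finset_sum _ (fun j _ => (hAentry i j).norm))
  -- bound M for cnorm (A p)
  obtain ⟨pA, hpAK, hpA⟩ := hK.exists_isMaxOn hKne hcnormA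
  set M : ℝ := cnorm (A pA) + 1 with hMdef
  have hM1 : 1 ≤ M := le_add_of_nonneg_left (cnorm_nonneg _)
  have hMpos : 0 < M := lt_of_lt_of_le one_pos hM1
  have hMbd : ∀ p ∈ K, cnorm (A p) ≤ M := fun p hp =>
    le_trans (hpA hp) (le_add_of_nonneg_right one_pos.le)
  -- bound Mz for ‖z p‖
  have hznorm : ContinuousOn (fun p : ℝ × ℝ => ‖z p.1 p.2‖) K := hzcont.norm
  obtain ⟨pz, hpzK, hpz⟩ := hK.exists_isMaxOn hKne hznorm
  set Mz : ℝ := ‖z pz.1 pz.2‖ + 1 with hMzdef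
  have hMzpos : 0 < Mz := lt_of_lt_of_le one_pos (le_add_of_nonneg_left (norm_nonneg _))
  have hMzbd : ∀ p ∈ K, ‖z p.1 p.2‖ ≤ Mz := fun p hp =>
    le_trans (hpz hp) (le_add_of_nonneg_right one_pos.le)
  -- cardinality
  have hcard : 0 < (Fintype.card (Fin m ⊕ Fin m) : ℝ) := by
    have : 0 < Fintype.card (Fin m ⊕ Fin m) := Fintype.card_pos_iff.2 ⟨Sum.inl ⟨0, hm⟩⟩
    exact_mod_cast this
  set c2 : ℝ := (Fintype.card (Fin m ⊕ Fin m) : ℝ) ^ 2 with hc2def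
  have hc2pos : 0 < c2 := by positivity
  -- constants
  set E : ℝ := Real.exp (4 * M * Δ) with hEdef
  have hEpos : 0 < E := Real.exp_pos _
  set W : ℝ := ε / (2 * Δ * E) with hWdef
  have hWpos : 0 < W := by positivity
  set εB : ℝ := W / (2 * c2 * Mz) with hεBdef
  have hεBpos : 0 < εB := by positivity
  set εz : ℝ := W / (4 * M) with hεzdef
  have hεzpos : 0 < εz := by positivity
  -- uniform continuity
  have hUCA := (hK.uniformContinuousOn_of_continuous hAfcont)
  rw [Metric.uniformContinuousOn_iff] at hUCA
  obtain ⟨δ1, hδ1pos, hδ1⟩ := hUCA εB hεBpos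
  have hUCz := (hK.uniformContinuousOn_of_continuous hzcont)
  rw [Metric.uniformContinuousOn_iff] at hUCz
  obtain ⟨δ2, hδ2pos, hδ2⟩ := hUCz εz hεzpos
  set d : ℝ := min (min δ1 δ2) (1 / (2 * M)) with hddef
  have hdpos : 0 < d := lt_min (lt_min hδ1pos hδ2pos) (by positivity)
  obtain ⟨N₀, hN₀⟩ := exists_nat_gt (Δ / d)
  refine ⟨N₀, ?_⟩
  intro N hNN₀ hN1 s hs zs hzs0 hrec
  set h : ℝ := (T₀ - t₀) / N with hhdef
  have hNpos : 0 < (N : ℝ) := by exact_mod_cast hN1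
  have hhpos : 0 < h := by positivity
  have hhd : h < d := by
    have h1 : Δ / d < (N : ℝ) := lt_of_lt_of_le hN₀ (by exact_mod_cast hNN₀)
    rw [div_lt_iff₀ hdpos] at h1
    rw [hhdef, ← hΔdef, div_lt_iff₀ hNpos]
    linarith [h1]
  have hhδ1 : h < δ1 := lt_of_lt_of_le hhd (le_trans (min_le_left _ _) (min_le_left _ _))
  have hhδ2 : h < δ2 := lt_of_lt_of_le hhd (le_trans (min_le_left _ _) (min_le_right _ _))
  have hhM : h * M ≤ 1 / 2 := by
    have : h < 1 / (2 * M) := lt_of_lt_of_le hhd (min_le_right _ _)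
    rw [lt_div_iff₀ (by positivity)] at this
    nlinarith
  have hhN : h * N = Δ := by
    rw [hhdef, ← hΔdef]
    exact div_mul_cancel₀ _ (ne_of_gt hNpos)
  -- grid points
  set t : ℕ → ℝ := fun n => t₀ + (n : ℝ) * h with htdef
  have ht0 : t 0 = t₀ := by simp [htdef]
  have htsucc : ∀ n : ℕ, t (n + 1) = t n + h := by
    intro n; simp [htdef]; push_cast; ring
  have htmem : ∀ n : ℕ, n ≤ N → t n ∈ Set.Icc t₀ T₀ := by
    intro n hn
    have hcn : (0 : ℝ) ≤ (n : ℝ) := Nat.cast_nonneg n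
    have hcnN : (n : ℝ) ≤ N := by exact_mod_cast hn
    have hNh : (N : ℝ) * h = Δ := by rw [mul_comm]; exact hhN
    constructor
    · show t₀ ≤ t₀ + (n : ℝ) * h
      nlinarith
    · show t₀ + (n : ℝ) * h ≤ T₀
      have h2 : (n : ℝ) * h ≤ (N : ℝ) * h := by nlinarith
      have hΔ' : Δ = T₀ - t₀ := hΔdef
      nlinarith
  have hsmem : ∀ n : ℕ, n ≤ N → (s, t n) ∈ K := fun n hn => ⟨hs, htmem n hn⟩
  -- the derivative function
  set F : ℝ → EuclideanSpace ℂ (Fin m ⊕ Fin m) := fun τ => mvE (A (s, τ)) (z s τ) with hFdef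
  have hFcont : ContinuousOn F (Set.Icc t₀ T₀) := by
    have hmap : Set.MapsTo (fun τ : ℝ => (s, τ)) (Set.Icc t₀ T₀) K :=
      fun τ hτ => ⟨hs, hτ⟩
    have hcont2 : ContinuousOn (fun p : ℝ × ℝ => mvE (A p) (z p.1 p.2)) K := by
      apply ((EuclideanSpace.equiv (Fin m ⊕ Fin m) ℂ).symm.continuous.comp_continuousOn)
      apply continuousOn_pi.2
      intro i
      have : ContinuousOn (fun p : ℝ × ℝ => ∑ j : (Fin m ⊕ Fin m), A p i j * (z p.1 p.2 j)) K := by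
        apply continuousOn_finset_sum
        intro j _
        apply (hAentry i j).mul
        exact ((continuous_apply j).comp
          (PiLp.continuous_ofLp 2 (fun _ : (Fin m ⊕ Fin m) => ℂ))).comp_continuousOn hzcont
      exact this.congr (fun p _ => rfl)
    exact hcont2.comp ((continuous_const.prodMk continuous_id).continuousOn) hmap
  -- FTC
  have hFTC : ∀ n : ℕ, n < N →
      z s (t (n + 1)) - z s (t n) = ∫ τ in (t n)..(t (n + 1)), F τ := by
    intro n hn
    have hle : t n ≤ t (n + 1) := by rw [htsucc]; linarith
    have huIcc : Set.uIcc (t n) (t (n + 1)) = Set.Icc (t n) (t (n + 1)) := Set.uIcc_of_le hle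
    have hsub : Set.Icc (t n) (t (n + 1)) ⊆ Set.Icc t₀ T₀ := by
      apply Set.Icc_subset_Icc
      · exact (htmem n hn.le).1
      · exact (htmem (n + 1) hn).2
    symm
    apply intervalIntegral.integral_eq_sub_of_hasDerivAt
    · intro x hx
      rw [huIcc] at hx
      exact hz s hs x (hsub hx)
    · apply ContinuousOn.intervalIntegrable
      exact hFcont.mono (by rw [huIcc]; exact hsub)
  -- truncation error
  set τe : ℕ → EuclideanSpace ℂ (Fin m ⊕ Fin m) := fun n =>
    z s (t (n + 1)) - z s (t n) - h • mvE (A (s, t n)) (glue (z s (t (n + 1))) (z s (t n)))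
    with hτedef
  have hτbd : ∀ n : ℕ, n < N → ‖τe n‖ ≤ h * W := by
    intro n hn
    have hle : t n ≤ t (n + 1) := by rw [htsucc]; linarith
    have hsub : Set.Icc (t n) (t (n + 1)) ⊆ Set.Icc t₀ T₀ := by
      apply Set.Icc_subset_Icc
      · exact (htmem n hn.le).1
      · exact (htmem (n + 1) hn).2
    set C : EuclideanSpace ℂ (Fin m ⊕ Fin m) := mvE (A (s, t n)) (glue (z s (t (n + 1))) (z s (t n)))
      with hCdef
    have hint : IntervalIntegrable F MeasureTheory.volume (t n) (t (n + 1)) := by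
      apply ContinuousOn.intervalIntegrable
      exact hFcont.mono (by rw [Set.uIcc_of_le hle]; exact hsub)
    have hlen : t (n + 1) - t n = h := by rw [htsucc]; ring
    have hτeq : (∫ x in (t n)..(t (n + 1)), (F x - C)) =
        z s (t (n + 1)) - z s (t n) - h • C := by
      rw [intervalIntegral.integral_sub hint intervalIntegrable_const,
        intervalIntegral.integral_const, ← hFTC n hn, hlen]
    show ‖z s (t (n + 1)) - z s (t n) - h • C‖ ≤ h * W
    rw [← hτeq]
    have hbd : ∀ x ∈ Set.uIoc (t n) (t (n + 1)), ‖F x - C‖ ≤ W := by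
      intro x hx
      have hxmem : x ∈ Set.Icc (t n) (t (n + 1)) := by
        rw [Set.uIoc_of_le hle] at hx
        exact ⟨hx.1.le, hx.2⟩
      have hxK : (s, x) ∈ K := ⟨hs, hsub hxmem⟩
      have hxd : |x - t n| ≤ h := by
        rw [abs_sub_le_iff]
        constructor
        · have := hxmem.2; rw [htsucc] at this; linarith
        · linarith [hxmem.1]
      have hxd1 : |x - t (n + 1)| ≤ h := by
        rw [abs_sub_le_iff, htsucc]
        constructor
        · linarith [hxmem.2, htsucc n]
        · have := hxmem.1; linarith
      -- split
      have hsplit : F x - C =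
          mvE (A (s, x) - A (s, t n)) (z s x) +
          mvE (A (s, t n)) (z s x - glue (z s (t (n + 1))) (z s (t n))) := by
        rw [← mvE_sub_left, ← mvE_sub_right, hFdef, hCdef]
        abel
      rw [hsplit]
      have hdistK : ∀ q : ℝ, (s, q) ∈ K → |x - q| < δ1 →
          cnorm (A (s, x) - A (s, q)) ≤ c2 * εB := by
        intro q hq hdq
        have hdp : dist ((s, x) : ℝ × ℝ) (s, q) < δ1 := by
          rw [Prod.dist_eq, dist_self, Real.dist_eq]
          exact max_lt hδ1pos hdq
        have := hδ1 (s, x) hxK (s, q) hq hdp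
        have hent : ∀ i j : (Fin m ⊕ Fin m), ‖(A (s, x) - A (s, q)) i j‖ ≤ εB := by
          intro i j
          rw [Matrix.sub_apply, ← dist_eq_norm]
          calc dist (A (s, x) i j) (A (s, q) i j)
              = dist (Af (s, x) (i, j)) (Af (s, q) (i, j)) := rfl
            _ ≤ dist (Af (s, x)) (Af (s, q)) := dist_le_pi_dist _ _ _
            _ ≤ εB := this.le
        calc cnorm (A (s, x) - A (s, q)) ≤ ∑ _i : (Fin m ⊕ Fin m), ∑ _j : (Fin m ⊕ Fin m), εB := by
              apply Finset.sum_le_sum; intro i _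
              apply Finset.sum_le_sum; intro j _
              exact hent i j
          _ = c2 * εB := by
              simp [Finset.sum_const, hc2def]
              ring
      have hzclose : ∀ q : ℝ, (s, q) ∈ K → |x - q| < δ2 → ‖z s x - z s q‖ ≤ εz := by
        intro q hq hdq
        have hdp : dist ((s, x) : ℝ × ℝ) (s, q) < δ2 := by
          rw [Prod.dist_eq, dist_self, Real.dist_eq]
          exact max_lt hδ2pos hdq
        have := hδ2 (s, x) hxK (s, q) hq hdp
        rw [dist_eq_norm] at this
        exact this.le
      have ht1 : ‖mvE (A (s, x) - A (s, t n)) (z s x)‖ ≤ W / 2 := by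
        calc ‖mvE (A (s, x) - A (s, t n)) (z s x)‖
            ≤ cnorm (A (s, x) - A (s, t n)) * ‖z s x‖ := norm_mvE_le _ _
          _ ≤ (c2 * εB) * Mz := by
              apply mul_le_mul
              · exact hdistK (t n) (hsmem n hn.le) (lt_of_le_of_lt hxd hhδ1)
              · exact hMzbd (s, x) hxK
              · exact norm_nonneg _
              · positivity
          _ = W / 2 := by
              rw [hεBdef]
              field_simp
      have ht2 : ‖mvE (A (s, t n)) (z s x - glue (z s (t (n + 1))) (z s (t n)))‖ ≤ W / 2 := by
        have hzx : z s x - glue (z s (t (n + 1))) (z s (t n)) =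
            glue (z s x - z s (t (n + 1))) (z s x - z s (t n)) := by
          rw [← glue_sub, glue_self]
        calc ‖mvE (A (s, t n)) (z s x - glue (z s (t (n + 1))) (z s (t n)))‖
            ≤ cnorm (A (s, t n)) * ‖z s x - glue (z s (t (n + 1))) (z s (t n))‖ :=
              norm_mvE_le _ _
          _ ≤ M * (εz + εz) := by
              apply mul_le_mul
              · exact hMbd _ (hsmem n hn.le)
              · rw [hzx]
                calc ‖glue (z s x - z s (t (n + 1))) (z s x - z s (t n))‖
                    ≤ ‖z s x - z s (t (n + 1))‖ + ‖z s x - z s (t n)‖ := norm_glue_le _ _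
                  _ ≤ εz + εz := add_le_add
                      (hzclose (t (n + 1)) (hsmem (n + 1) hn) (lt_of_le_of_lt hxd1 hhδ2))
                      (hzclose (t n) (hsmem n hn.le) (lt_of_le_of_lt hxd hhδ2))
              · exact norm_nonneg _
              · exact hMpos.le
          _ = W / 2 := by
              rw [hεzdef]
              field_simp
              ring
      calc ‖mvE (A (s, x) - A (s, t n)) (z s x) +
            mvE (A (s, t n)) (z s x - glue (z s (t (n + 1))) (z s (t n)))‖
          ≤ ‖mvE (A (s, x) - A (s, t n)) (z s x)‖ +
            ‖mvE (A (s, t n)) (z s x - glue (z s (t (n + 1))) (z s (t n)))‖ := norm_add_le _ _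
        _ ≤ W / 2 + W / 2 := add_le_add ht1 ht2
        _ = W := by ring
    calc ‖∫ x in (t n)..(t (n + 1)), (F x - C)‖ ≤ W * |t (n + 1) - t n| :=
          intervalIntegral.norm_integral_le_of_norm_le_const hbd
      _ = W * h := by rw [htsucc]; congr 1; rw [abs_of_pos]; ring; linarith
      _ = h * W := by ring
  -- error sequence
  set e : ℕ → EuclideanSpace ℂ (Fin m ⊕ Fin m) := fun n => z s (t n) - zs n with hedef
  have he0 : e 0 = 0 := by
    rw [hedef]; simp only [ht0, hzs0]; exact sub_self _
  -- error identity
  have hid : ∀ n : ℕ, n < N →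
      e (n + 1) = e n + h • mvE (A (s, t n)) (glue (e (n + 1)) (e n)) + τe n := by
    intro n hn
    have hrecn' : zs (n + 1) = zs n + h • mvE (A (s, t n)) (glue (zs (n + 1)) (zs n)) := by
      have h0 := hrec n hn
      rw [Complex.coe_smul] at h0
      exact h0
    have hglue : glue (e (n + 1)) (e n) =
        glue (z s (t (n + 1))) (z s (t n)) - glue (zs (n + 1)) (zs n) := by
      rw [glue_sub]
    have hL : e (n + 1) = z s (t (n + 1)) - zs n
        - h • mvE (A (s, t n)) (glue (zs (n + 1)) (zs n)) := by
      show z s (t (n + 1)) - zs (n + 1) = _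
      nth_rewrite 1 [hrecn']
      abel
    have hR : e n + h • mvE (A (s, t n)) (glue (e (n + 1)) (e n)) + τe n
        = z s (t (n + 1)) - zs n - h • mvE (A (s, t n)) (glue (zs (n + 1)) (zs n)) := by
      rw [hglue, ← mvE_sub_right, smul_sub]
      show (z s (t n) - zs n)
          + (h • mvE (A (s, t n)) (glue (z s (t (n + 1))) (z s (t n)))
             - h • mvE (A (s, t n)) (glue (zs (n + 1)) (zs n)))
          + (z s (t (n + 1)) - z s (t n)
             - h • mvE (A (s, t n)) (glue (z s (t (n + 1))) (z s (t n)))) = _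
      abel
    rw [hR]
    exact hL
  have hgoal : ∀ k : ℕ, z s (t₀ + (k : ℝ) * h) - zs k = e k := fun k => rfl
  clear_value K Δ A Af M Mz c2 E W εB εz d h t F τe e
  -- recursion inequality
  have hrecin : ∀ n : ℕ, n < N →
      ‖e (n + 1)‖ ≤ (1 + 4 * (h * M)) * ‖e n‖ + 2 * (h * W) := by
    intro n hn
    have h1 : ‖e (n + 1)‖ ≤ ‖e n‖ + h * M * (‖e (n + 1)‖ + ‖e n‖) + h * W := by
      calc ‖e (n + 1)‖
          = ‖e n + h • mvE (A (s, t n)) (glue (e (n + 1)) (e n)) + τe n‖ :=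
            congrArg norm (hid n hn)
        _ ≤ ‖e n + h • mvE (A (s, t n)) (glue (e (n + 1)) (e n))‖ + ‖τe n‖ := norm_add_le _ _
        _ ≤ ‖e n‖ + ‖h • mvE (A (s, t n)) (glue (e (n + 1)) (e n))‖ + ‖τe n‖ := by
            apply add_le_add_left (norm_add_le _ _)
        _ ≤ ‖e n‖ + h * M * (‖e (n + 1)‖ + ‖e n‖) + h * W := by
            refine add_le_add (add_le_add_right ?_ _) (hτbd n hn)
            · rw [norm_smul, Real.norm_eq_abs, abs_of_pos hhpos]
              calc h * ‖mvE (A (s, t n)) (glue (e (n + 1)) (e n))‖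
                  ≤ h * (cnorm (A (s, t n)) * ‖glue (e (n + 1)) (e n)‖) := by
                    apply mul_le_mul_of_nonneg_left (norm_mvE_le _ _) hhpos.le
                _ ≤ h * (M * (‖e (n + 1)‖ + ‖e n‖)) := by
                    apply mul_le_mul_of_nonneg_left _ hhpos.le
                    apply mul_le_mul (hMbd _ (hsmem n hn.le)) (norm_glue_le _ _)
                      (norm_nonneg _) hMpos.le
                _ = h * M * (‖e (n + 1)‖ + ‖e n‖) := by ring
    have ha0 : (0 : ℝ) ≤ ‖e n‖ := norm_nonneg _
    have ha1 : (0 : ℝ) ≤ ‖e (n + 1)‖ := norm_nonneg _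
    have hx0 : (0 : ℝ) ≤ h * M := by positivity
    have hhW0 : (0 : ℝ) ≤ h * W := by positivity
    have h12 : (0 : ℝ) ≤ 1 - 2 * (h * M) := by linarith
    have hpos1 : (0 : ℝ) < 1 - h * M := by linarith
    have key2 : (1 - h * M) * ‖e (n + 1)‖ ≤ (1 + h * M) * ‖e n‖ + h * W := by nlinarith
    have key3 : (1 + h * M) * ‖e n‖ + h * W
        ≤ (1 - h * M) * ((1 + 4 * (h * M)) * ‖e n‖ + 2 * (h * W)) := by
      have hnn : (0:ℝ) ≤ (1 - 2 * (h * M)) * (2 * (h * M) * ‖e n‖ + h * W) :=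
        mul_nonneg h12 (add_nonneg (mul_nonneg (by linarith) ha0) hhW0)
      linarith [hnn]
    exact (mul_le_mul_iff_right₀ hpos1).1 (le_trans key2 key3)
  -- discrete Gronwall
  have hgron : ∀ n : ℕ, n ≤ N →
      ‖e n‖ ≤ 2 * (h * W) * n * (1 + 4 * (h * M)) ^ n := by
    intro n
    induction n with
    | zero => intro _; simp [he0]
    | succ n ih =>
      intro hn1
      have hn : n < N := hn1
      have ihn := ih hn.le
      have hR1 : (1 : ℝ) ≤ 1 + 4 * (h * M) := by
        have : (0:ℝ) ≤ h * M := mul_nonneg hhpos.le hMpos.le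
        linarith
      have hRpow : (1 : ℝ) ≤ (1 + 4 * (h * M)) ^ (n + 1) := one_le_pow₀ hR1
      calc ‖e (n + 1)‖ ≤ (1 + 4 * (h * M)) * ‖e n‖ + 2 * (h * W) := hrecin n hn
        _ ≤ (1 + 4 * (h * M)) * (2 * (h * W) * n * (1 + 4 * (h * M)) ^ n) + 2 * (h * W) := by
            apply add_le_add_left
            apply mul_le_mul_of_nonneg_left ihn (by linarith)
        _ = 2 * (h * W) * n * (1 + 4 * (h * M)) ^ (n + 1) + 2 * (h * W) := by ring
        _ ≤ 2 * (h * W) * n * (1 + 4 * (h * M)) ^ (n + 1)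
            + 2 * (h * W) * (1 + 4 * (h * M)) ^ (n + 1) := by
            apply add_le_add_right
            have hDnn : (0:ℝ) ≤ 2 * (h * W) := by
              have : (0:ℝ) ≤ h * W := mul_nonneg hhpos.le hWpos.le
              linarith
            calc 2 * (h * W) = 2 * (h * W) * 1 := by ring
              _ ≤ 2 * (h * W) * (1 + 4 * (h * M)) ^ (n + 1) :=
                  mul_le_mul_of_nonneg_left hRpow hDnn
        _ = 2 * (h * W) * (((n + 1 : ℕ)) : ℝ) * (1 + 4 * (h * M)) ^ (n + 1) := by
            push_cast; ring
  -- final bound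
  intro n hn
  have key : ‖e n‖ ≤ ε := by
    have h1 := hgron n hn
    have hR1 : (1 : ℝ) ≤ 1 + 4 * (h * M) := by
      have : (0:ℝ) ≤ h * M := mul_nonneg hhpos.le hMpos.le
      linarith
    have h2 : 2 * (h * W) * n * (1 + 4 * (h * M)) ^ n
        ≤ 2 * (h * W) * N * (1 + 4 * (h * M)) ^ N := by
      apply mul_le_mul
      · apply mul_le_mul_of_nonneg_left _ (by positivity)
        exact_mod_cast hn
      · exact pow_le_pow_right₀ hR1 hn
      · positivity
      · positivity
    have h3 : (1 + 4 * (h * M)) ^ N ≤ E := by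
      calc (1 + 4 * (h * M)) ^ N ≤ (Real.exp (4 * (h * M))) ^ N := by
            apply pow_le_pow_left₀ (by linarith)
            linarith [Real.add_one_le_exp (4 * (h * M))]
          _ = Real.exp ((N : ℝ) * (4 * (h * M))) := by rw [Real.exp_nat_mul]
          _ = E := by
            rw [hEdef]
            congr 1
            have : (N : ℝ) * (4 * (h * M)) = 4 * M * (h * N) := by ring
            rw [this, hhN]
    have h4 : 2 * (h * W) * N * (1 + 4 * (h * M)) ^ N ≤ 2 * (h * W) * N * E := by
      apply mul_le_mul_of_nonneg_left h3 (by positivity)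
    have h5 : 2 * (h * W) * N * E = ε := by
      have : 2 * (h * W) * N * E = 2 * W * (h * N) * E := by ring
      rw [this, hhN, hWdef]
      field_simp
    linarith
  rw [hgoal n]
  exact key
end
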